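/- Let τ2, τ3 > 0, λ > 0, and let β_λ > 0 be the unique zero of g_λ(β) = τ2·2^{τ3/β}·(1 − τ3·ln 2/β) − τ2 + λ. Then β_λ is the unique minimizer over (0, ∞) of the function β ↦ τ2·β·(2^{τ3/β} − 1) + λ·β. -/

import Mathlib

/-- The unique positive zero `β_λ` of
`g_λ(β) = τ2·2^{τ3/β}·(1 − τ3·ln 2/β) − τ2 + λ` is the unique minimizer over
`(0,∞)` of `β ↦ τ2·β·(2^{τ3/β} − 1) + λ·β`. -/
theorem fast_beta_lambda_unique_minimizer
    (τ2 τ3 lam : ℝ) (h2 : 0 < τ2) (h3 : 0 < τ3) (hlam : 0 < lam)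
    (βl : ℝ) (hβl : 0 < βl)
    (hzero : τ2 * (2 : ℝ) ^ (τ3 / βl) * (1 - τ3 * Real.log 2 / βl) - τ2 + lam = 0) :
    ∀ β : ℝ, 0 < β → β ≠ βl →
      τ2 * βl * ((2 : ℝ) ^ (τ3 / βl) - 1) + lam * βl
        < τ2 * β * ((2 : ℝ) ^ (τ3 / β) - 1) + lam * β := by
  set F : ℝ → ℝ := fun b => τ2 * b * ((2:ℝ) ^ (τ3 / b) - 1) + lam * b with hFdef
  set g : ℝ → ℝ := fun b =>
      τ2 * (2:ℝ) ^ (τ3 / b) * (1 - τ3 * Real.log 2 / b) - τ2 + lam with hgdef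
  -- derivative of the exponential part
  have hE : ∀ b : ℝ, 0 < b → HasDerivAt (fun x => (2:ℝ) ^ (τ3 / x))
      ((2:ℝ) ^ (τ3 / b) * Real.log 2 * (-(τ3 / b ^ 2))) b := by
    intro b hb
    have hu : HasDerivAt (fun x : ℝ => τ3 / x) (-(τ3 / b ^ 2)) b := by
      simpa [div_eq_mul_inv, mul_comm, neg_div, mul_neg] using
        (hasDerivAt_inv hb.ne').const_mul τ3
    exact (Real.hasStrictDerivAt_const_rpow two_pos (τ3 / b)).hasDerivAt.comp b hu
  -- derivative of F is g
  have hF : ∀ b : ℝ, 0 < b → HasDerivAt F (g b) b := by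
    intro b hb
    have h1 : HasDerivAt (fun x : ℝ => τ2 * x) τ2 b := by
      simpa using (hasDerivAt_id b).const_mul τ2
    have h2' : HasDerivAt (fun x : ℝ => lam * x) lam b := by
      simpa using (hasDerivAt_id b).const_mul lam
    have := (h1.mul ((hE b hb).sub_const 1)).add h2'
    refine this.congr_deriv ?_
    simp only [hgdef]
    field_simp
    ring
  -- derivative of g
  have hg : ∀ b : ℝ, 0 < b → HasDerivAt g
      (τ2 * (2:ℝ) ^ (τ3 / b) * (τ3 * Real.log 2) ^ 2 / b ^ 3) b := by
    intro b hb
    have hu : HasDerivAt (fun x : ℝ => τ3 * Real.log 2 / x)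
        (-(τ3 * Real.log 2 / b ^ 2)) b := by
      simpa [div_eq_mul_inv, mul_comm, neg_div, mul_neg] using
        (hasDerivAt_inv hb.ne').const_mul (τ3 * Real.log 2)
    have := ((((hE b hb).const_mul τ2).mul (hu.const_sub 1)).sub_const τ2).add_const lam
    refine this.congr_deriv ?_
    have hlog : (0:ℝ) < Real.log 2 := Real.log_pos one_lt_two
    field_simp
    ring
  have hglb : g βl = 0 := hzero
  -- g is strictly monotone on (0,∞)
  have hgmono : StrictMonoOn g (Set.Ioi 0) := by
    apply strictMonoOn_of_deriv_pos (convex_Ioi 0)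
    · exact fun x hx => ((hg x hx).continuousAt).continuousWithinAt
    · intro x hx
      rw [interior_Ioi] at hx
      have hx' : 0 < x := hx
      rw [(hg x hx).deriv]
      have hlog : (0:ℝ) < Real.log 2 := Real.log_pos one_lt_two
      have hrp : (0:ℝ) < (2:ℝ) ^ (τ3 / x) := Real.rpow_pos_of_pos two_pos _
      positivity
  intro β hβ hne
  rcases lt_or_gt_of_ne hne with hlt | hgt
  · -- β < βl : F strictly anti on Ioc 0 βl
    have hanti : StrictAntiOn F (Set.Ioc 0 βl) := by
      apply strictAntiOn_of_deriv_neg (convex_Ioc 0 βl)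
      · intro x hx
        exact ((hF x hx.1).continuousAt).continuousWithinAt
      · intro x hx
        rw [interior_Ioc] at hx
        rw [(hF x hx.1).deriv]
        have := hgmono hx.1 (Set.mem_Ioi.mpr hβl) hx.2
        linarith [hglb]
    exact hanti ⟨hβ, hlt.le⟩ ⟨hβl, le_refl βl⟩ hlt
  · -- βl < β : F strictly mono on Ici βl
    have hmono : StrictMonoOn F (Set.Ici βl) := by
      apply strictMonoOn_of_deriv_pos (convex_Ici βl)
      · intro x hx
        exact ((hF x (lt_of_lt_of_le hβl hx)).continuousAt).continuousWithinAt
      · intro x hx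
        rw [interior_Ici] at hx
        rw [(hF x (hβl.trans hx)).deriv]
        have := hgmono (Set.mem_Ioi.mpr hβl) (Set.mem_Ioi.mpr (hβl.trans hx)) hx
        linarith [hglb]
    exact hmono (Set.self_mem_Ici) (le_of_lt hgt) hgt
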